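/- For A ⊆ T and u,v,w ∈ W, the twisted length is additive: ℓ_A(u,v) + ℓ_A(v,w) = ℓ_A(u,w), and consequently ℓ_A(v,w) = ℓ_A(w) − ℓ_A(v) and ℓ_A(u,v) = −ℓ_A(v,u). -/

import Mathlib

/- Common definitions: reflections, inversion sets, Bruhat graph paths, Bruhat preclosure,
   twisted inversion sets, twisted lengths, twisted Bruhat graph/order, reflection orders,
   initial sections, and the right weak order, for a Coxeter system `cs`. -/

namespace CoxeterSystem

variable {B : Type*} {W : Type*} [Group W] {M : CoxeterMatrix B}
variable (cs : CoxeterSystem M W)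

/-- The set of reflections `T`. -/
def reflSet : Set W := {t | cs.IsReflection t}

/-- The inversion set `N(w) = {t ∈ T : ℓ(tw) < ℓ(w)}`. -/
def invSet (w : W) : Set W :=
  {t | cs.IsReflection t ∧ cs.length (t * w) < cs.length w}

/-- One step in the Bruhat graph using only edges labelled (on the right) by elements of `A`:
`u → u * t` with `t ∈ A` a reflection and `ℓ(u) < ℓ(u * t)`. -/
def AStep (A : Set W) (u v : W) : Prop :=
  ∃ t ∈ A, cs.IsReflection t ∧ v = u * t ∧ cs.length u < cs.length v

/-- The (right) Bruhat preclosure `⟨A⟩`: reflections reachable from the identity by a path in the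
Bruhat graph all of whose edge labels lie in `A`. -/
def bclosure (A : Set W) : Set W :=
  {t | cs.IsReflection t ∧ Relation.ReflTransGen (cs.AStep A) 1 t}

/-- The twisted inversion set `w · A = N(w) △ w A w⁻¹`. -/
def twisted (w : W) (A : Set W) : Set W :=
  symmDiff (cs.invSet w) ((fun x => w * x * w⁻¹) '' A)

/-- The twisted length `ℓ_A(v, w) = ℓ(w v⁻¹) - 2 |N(v w⁻¹) ∩ v · A|`. -/
noncomputable def tlen (A : Set W) (v w : W) : ℤ :=
  (cs.length (w * v⁻¹) : ℤ) - 2 * ((cs.invSet (v * w⁻¹)) ∩ cs.twisted v A).ncard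

/-- The one-argument twisted length `ℓ_A(w) = ℓ_A(e, w) = ℓ(w) - 2 |N(w⁻¹) ∩ A|`. -/
noncomputable def tlen₀ (A : Set W) (w : W) : ℤ :=
  (cs.length w : ℤ) - 2 * ((cs.invSet w⁻¹) ∩ A).ncard

/-- An edge of the twisted Bruhat graph `Ω_{(W,A)}`: Bruhat graph edges with labels not in `A`,
and reversed Bruhat graph edges with labels in `A`. -/
def TwEdge (A : Set W) (u v : W) : Prop :=
  (∃ t, cs.IsReflection t ∧ t ∉ A ∧ v = u * t ∧ cs.length u < cs.length v) ∨
  (∃ t, cs.IsReflection t ∧ t ∈ A ∧ u = v * t ∧ cs.length v < cs.length u)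

/-- The twisted Bruhat order `u ≤_A v`: reachability in the twisted Bruhat graph. -/
def tle (A : Set W) (u v : W) : Prop := Relation.ReflTransGen (cs.TwEdge A) u v

/-- A reflection subgroup: a subgroup generated by the reflections it contains. -/
def IsReflectionSubgroup (W' : Subgroup W) : Prop :=
  W' = Subgroup.closure ((W' : Set W) ∩ cs.reflSet)

/-- The canonical generators `χ(W') = {t ∈ T : N(t) ∩ W' = {t}}` of a reflection subgroup. -/
def chi (W' : Subgroup W) : Set W :=
  {t | cs.IsReflection t ∧ cs.invSet t ∩ (W' : Set W) = {t}}

/-- A reflection order: a strict total order on the set of reflections such that for every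
dihedral reflection subgroup `W'` with canonical generators `{r, s}`, `r ≠ s`, if `r ≺ s` then
every reflection of `W'` lies (weakly) between `r` and `s`.  (This betweenness condition for
*all* dihedral reflection subgroups is equivalent to the alternating-chain condition
`r ≺ rsr ≺ ⋯ ≺ srs ≺ s`.) -/
def IsReflectionOrder (lt : W → W → Prop) : Prop :=
  (∀ t ∈ cs.reflSet, ¬ lt t t) ∧
  (∀ t₁ ∈ cs.reflSet, ∀ t₂ ∈ cs.reflSet, ∀ t₃ ∈ cs.reflSet,
      lt t₁ t₂ → lt t₂ t₃ → lt t₁ t₃) ∧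
  (∀ t₁ ∈ cs.reflSet, ∀ t₂ ∈ cs.reflSet, t₁ = t₂ ∨ lt t₁ t₂ ∨ lt t₂ t₁) ∧
  (∀ W' : Subgroup W, cs.IsReflectionSubgroup W' →
    ∀ r s : W, cs.chi W' = {r, s} → r ≠ s → lt r s →
      ∀ t ∈ (W' : Set W) ∩ cs.reflSet, (t = r ∨ lt r t) ∧ (t = s ∨ lt t s))

/-- `A` is an initial section of some reflection order. -/
def IsInitialSection (A : Set W) : Prop :=
  A ⊆ cs.reflSet ∧ ∃ lt : W → W → Prop, cs.IsReflectionOrder lt ∧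
    ∀ a ∈ A, ∀ b ∈ cs.reflSet \ A, lt a b

/-- The right weak order, characterized by containment of inversion sets. -/
def wle (u v : W) : Prop := cs.invSet u ⊆ cs.invSet v

/-- `j` is the join `u ∨_R v` in the right weak order. -/
def IsJoin (u v j : W) : Prop :=
  cs.wle u j ∧ cs.wle v j ∧ ∀ z : W, cs.wle u z → cs.wle v z → cs.wle j z

/-- The Bruhat preclosure computed inside a subgroup `H` of `W` (for a standard parabolic
subgroup `H = W_I`, the length function and the reflections of `W_I` are the restrictions of
those of `W`, so this is the Bruhat preclosure of the Coxeter system `(W_I, I)`). -/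
def bclosureIn (H : Subgroup W) (A : Set W) : Set W :=
  {t | cs.IsReflection t ∧ t ∈ H ∧
    Relation.ReflTransGen (fun u v => u ∈ H ∧ v ∈ H ∧ cs.AStep A u v) 1 t}

end CoxeterSystem

namespace CoxAux

open List
open scoped Classical

variable {B : Type*} {W : Type*} [Group W] {M : CoxeterMatrix B} (cs : CoxeterSystem M W)

local prefix:100 "σ" => cs.simple
local prefix:100 "π" => cs.wordProd
local prefix:100 "ℓ" => cs.length

/-- The sign-flipping function on `W × ℤˣ`. -/
noncomputable def sf (i : B) : W × ℤˣ → W × ℤˣ :=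
  fun p => (σ i * p.1 * σ i, if p.1 = σ i then -p.2 else p.2)

lemma simple_conj_eq_iff (i : B) (x : W) : σ i * x * σ i = σ i ↔ x = σ i := by
  constructor
  · intro h
    have h2 : x = (σ i)⁻¹ * (σ i * x * σ i) * (σ i)⁻¹ := by group
    rw [h, cs.inv_simple] at h2
    rw [h2, cs.simple_mul_simple_self, one_mul]
  · rintro rfl
    rw [cs.simple_mul_simple_self]; group

lemma sf_invol (i : B) : Function.Involutive (sf cs i) := by
  rintro ⟨t, ε⟩
  by_cases h : t = σ i
  · subst h
    simp [sf, cs.simple_mul_simple_self]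
  · simp only [sf, simple_conj_eq_iff, h, if_false]
    have h2 : σ i * (σ i * t * σ i) * σ i = t := by
      calc σ i * (σ i * t * σ i) * σ i = (σ i * σ i) * t * (σ i * σ i) := by group
      _ = t := by rw [cs.simple_mul_simple_self]; group
    rw [h2]

/-- The sign-flipping permutation on `W × ℤˣ`. -/
noncomputable def sg (i : B) : Equiv.Perm (W × ℤˣ) := (sf_invol cs i).toPerm

lemma sg_apply (i : B) (p : W × ℤˣ) :
    sg cs i p = (σ i * p.1 * σ i, if p.1 = σ i then -p.2 else p.2) := rfl

lemma sg_prod (ω : List B) (t : W) (ε : ℤˣ) :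
    ((ω.map (sg cs)).prod) (t, ε)
      = (π ω * t * (π ω)⁻¹, (-1 : ℤˣ) ^ ((cs.rightInvSeq ω).count t) * ε) := by
  induction ω with
  | nil => simp [CoxeterSystem.wordProd_nil]
  | cons i ω ih =>
    have hris : cs.rightInvSeq (i :: ω) = ((π ω)⁻¹ * σ i * π ω) :: cs.rightInvSeq ω := rfl
    rw [map_cons, prod_cons, Equiv.Perm.mul_apply, ih, sg_apply, hris, count_cons,
      cs.wordProd_cons]
    simp only [Prod.mk.injEq, beq_iff_eq]
    have hcond : (π ω * t * (π ω)⁻¹ = σ i) ↔ ((π ω)⁻¹ * σ i * π ω = t) := by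
      constructor
      · rintro h; rw [← h]; group
      · rintro rfl; group
    constructor
    · simp only [mul_inv_rev, cs.inv_simple]
      group
    · by_cases h : (π ω)⁻¹ * σ i * π ω = t
      · simp [hcond.mpr h, h, pow_succ]
      · simp [h, (not_iff_not.mpr hcond).mpr h]


lemma semiconj_pow {G : Type*} [Group G] (x y : G) (m : ℕ) :
    y * (x * y) ^ m = (y * x) ^ m * y := by
  induction m with
  | zero => simp
  | succ m ih =>
    calc y * (x * y) ^ (m + 1) = (y * x) * (y * (x * y) ^ m) := by
          rw [pow_succ']; simp only [← mul_assoc]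
    _ = (y * x) * ((y * x) ^ m * y) := by rw [ih]
    _ = (y * x) ^ (m + 1) * y := by rw [pow_succ']; simp only [← mul_assoc]

lemma dihedral_entry' {G : Type*} [Group G] (a b : G) (ha : a * a = 1) (hb : b * b = 1)
    (m : ℕ) : ((a * b) ^ m)⁻¹ * b * (a * b) ^ m = (b * a) ^ (2 * m) * b := by
  have hai : a⁻¹ = a := inv_eq_of_mul_eq_one_right ha
  have hbi : b⁻¹ = b := inv_eq_of_mul_eq_one_right hb
  have hab : ((a * b) ^ m)⁻¹ = (b * a) ^ m := by rw [← inv_pow, mul_inv_rev, hai, hbi]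
  calc ((a * b) ^ m)⁻¹ * b * (a * b) ^ m = (b * a) ^ m * ((b * a) ^ m * b) := by
        rw [hab, mul_assoc, semiconj_pow]
    _ = (b * a) ^ (2 * m) * b := by rw [← mul_assoc, ← pow_add, two_mul]

lemma dihedral_entry {G : Type*} [Group G] (a b : G) (ha : a * a = 1) (hb : b * b = 1)
    (m : ℕ) : (b * (a * b) ^ m)⁻¹ * a * (b * (a * b) ^ m) = (b * a) ^ (2 * m + 1) * b := by
  have hai : a⁻¹ = a := inv_eq_of_mul_eq_one_right ha
  have hbi : b⁻¹ = b := inv_eq_of_mul_eq_one_right hb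
  have hab : ((a * b) ^ m)⁻¹ = (b * a) ^ m := by rw [← inv_pow, mul_inv_rev, hai, hbi]
  have hme : m + (m + 1) = 2 * m + 1 := by omega
  calc (b * (a * b) ^ m)⁻¹ * a * (b * (a * b) ^ m)
      = ((a * b) ^ m)⁻¹ * (b⁻¹ * a * b) * (a * b) ^ m := by group
    _ = (b * a) ^ m * ((b * a) * (b * (a * b) ^ m)) := by rw [hab, hbi]; group
    _ = (b * a) ^ m * ((b * a) * ((b * a) ^ m * b)) := by rw [semiconj_pow]
    _ = ((b * a) ^ m * ((b * a) * (b * a) ^ m)) * b := by group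
    _ = (b * a) ^ (2 * m + 1) * b := by rw [← pow_succ', ← pow_add, hme]

lemma aw_even_succ (i j : B) (m : ℕ) :
    CoxeterSystem.alternatingWord i j (2 * (m + 1))
      = i :: j :: CoxeterSystem.alternatingWord i j (2 * m) := by
  have h1 : 2 * (m + 1) = (2 * m + 1) + 1 := by ring
  rw [h1, CoxeterSystem.alternatingWord_succ', CoxeterSystem.alternatingWord_succ']
  have : ¬ Even (2 * m + 1) := by simp [Nat.even_add_one]
  rw [if_neg this, if_pos (even_two_mul m)]

lemma sg_pow_eq_prod (i j : B) (m : ℕ) :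
    (sg cs i * sg cs j) ^ m
      = ((CoxeterSystem.alternatingWord i j (2 * m)).map (sg cs)).prod := by
  induction m with
  | zero => simp [CoxeterSystem.alternatingWord]
  | succ m ih =>
    rw [aw_even_succ, map_cons, map_cons, prod_cons, prod_cons, ← ih, pow_succ', mul_assoc]

lemma ris_alt (i j : B) (m : ℕ) :
    cs.rightInvSeq (CoxeterSystem.alternatingWord i j (2 * m))
      = ((List.range (2 * m)).reverse.map (fun e => (σ j * σ i) ^ e * σ j)) := by
  induction m with
  | zero => simp [CoxeterSystem.alternatingWord]
  | succ m ih =>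
    have h2 : 2 * (m + 1) = (2 * m) + 1 + 1 := by ring
    rw [aw_even_succ]
    have hris : ∀ (k : B) (ω : List B),
        cs.rightInvSeq (k :: ω) = ((π ω)⁻¹ * σ k * π ω) :: cs.rightInvSeq ω := fun _ _ => rfl
    rw [hris, hris, ih]
    have hrange : (List.range (2 * (m + 1))).reverse
        = (2 * m + 1) :: (2 * m) :: (List.range (2 * m)).reverse := by
      rw [h2, List.range_succ, List.range_succ]
      simp
    rw [hrange, map_cons, map_cons]
    have hπ : π (CoxeterSystem.alternatingWord i j (2 * m)) = (σ i * σ j) ^ m := by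
      rw [cs.prod_alternatingWord_eq_mul_pow]
      simp [even_two_mul m, Nat.mul_div_cancel_left m (by norm_num : 0 < 2)]
    have hb : (π (CoxeterSystem.alternatingWord i j (2 * m)))⁻¹ * σ j
          * π (CoxeterSystem.alternatingWord i j (2 * m))
        = (σ j * σ i) ^ (2 * m) * σ j := by
      rw [hπ]
      exact dihedral_entry' (σ i) (σ j) (cs.simple_mul_simple_self i)
        (cs.simple_mul_simple_self j) m
    have ha : (π (j :: CoxeterSystem.alternatingWord i j (2 * m)))⁻¹ * σ i
          * π (j :: CoxeterSystem.alternatingWord i j (2 * m))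
        = (σ j * σ i) ^ (2 * m + 1) * σ j := by
      rw [cs.wordProd_cons, hπ]
      exact dihedral_entry (σ i) (σ j) (cs.simple_mul_simple_self i)
        (cs.simple_mul_simple_self j) m
    rw [hb, ha]


lemma sg_liftable : M.IsLiftable (sg cs) := by
  intro i j
  apply Equiv.ext
  rintro ⟨t, ε⟩
  rw [sg_pow_eq_prod, sg_prod]
  have hπ : π (CoxeterSystem.alternatingWord i j (2 * M i j)) = 1 := by
    rw [cs.prod_alternatingWord_eq_mul_pow]
    simp [even_two_mul, Nat.mul_div_cancel_left _ (by norm_num : 0 < 2),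
      cs.simple_mul_simple_pow i j]
  have hcount : Even ((cs.rightInvSeq (CoxeterSystem.alternatingWord i j (2 * M i j))).count t) := by
    rw [ris_alt, List.map_reverse, List.count_reverse]
    have h2 : 2 * M i j = M i j + M i j := two_mul _
    rw [h2, List.range_add, List.map_append, List.count_append]
    have : (List.range (M i j)).map ((fun e => (σ j * σ i) ^ e * σ j) ∘ (M i j + ·))
        = (List.range (M i j)).map (fun e => (σ j * σ i) ^ e * σ j) := by
      apply List.map_congr_left
      intro e _
      simp only [Function.comp_apply]
      rw [pow_add, cs.simple_mul_simple_pow' i j, one_mul]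
    rw [List.map_map, this]
    exact Even.add_self _
  rw [hπ]
  obtain ⟨k, hk⟩ := hcount
  rw [hk]
  simp [pow_add]

/-- The sign homomorphism `W →* Perm (W × ℤˣ)`. -/
noncomputable def phi : W →* Equiv.Perm (W × ℤˣ) := cs.lift ⟨sg cs, sg_liftable cs⟩

lemma phi_simple (i : B) : phi cs (σ i) = sg cs i := cs.lift_apply_simple _ i

lemma phi_wordProd (ω : List B) : phi cs (π ω) = ((ω.map (sg cs)).prod) := by
  rw [CoxeterSystem.wordProd, map_list_prod, List.map_map]
  congr 1
  apply List.map_congr_left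
  intro i _
  exact phi_simple cs i

/-- The sign cocycle. -/
noncomputable def eta (w t : W) : ℤˣ := ((phi cs w) (t, 1)).2

lemma phi_apply (w t : W) (ε : ℤˣ) : phi cs w (t, ε) = (w * t * w⁻¹, eta cs w t * ε) := by
  obtain ⟨ω, rfl⟩ := cs.wordProd_surjective w
  rw [phi_wordProd, sg_prod]
  unfold eta
  rw [phi_wordProd, sg_prod]
  simp

lemma eta_mul (x y t : W) : eta cs (x * y) t = eta cs x (y * t * y⁻¹) * eta cs y t := by
  have h : ((phi cs x) ((phi cs y) (t, 1))).2 = eta cs (x * y) t := by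
    rw [← Equiv.Perm.mul_apply, ← map_mul]
    rfl
  rw [phi_apply cs y t 1, phi_apply cs x] at h
  simpa using h.symm

lemma eta_simple (i : B) (t : W) : eta cs (σ i) t = if t = σ i then -1 else 1 := by
  unfold eta
  rw [phi_simple]
  rfl

lemma eta_wordProd (ω : List B) (t : W) :
    eta cs (π ω) t = (-1 : ℤˣ) ^ ((cs.rightInvSeq ω).count t) := by
  unfold eta
  rw [phi_wordProd, sg_prod, mul_one]


lemma eta_conj_step (j : B) (t' : W) (h : eta cs t' t' = -1) :
    eta cs (σ j * t' * σ j) (σ j * t' * σ j) = -1 := by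
  have hs : σ j * σ j = 1 := cs.simple_mul_simple_self j
  have hsi : (σ j)⁻¹ = σ j := cs.inv_simple j
  have hconj1 : (t' * σ j) * (σ j * t' * σ j) * (t' * σ j)⁻¹ = t' := by
    calc (t' * σ j) * (σ j * t' * σ j) * (t' * σ j)⁻¹
        = t' * (σ j * σ j) * t' * (σ j * (σ j)⁻¹) * t'⁻¹ := by group
      _ = t' := by rw [hs, mul_inv_cancel]; group
  have hconj2 : σ j * (σ j * t' * σ j) * (σ j)⁻¹ = t' := by
    calc σ j * (σ j * t' * σ j) * (σ j)⁻¹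
        = (σ j * σ j) * t' * (σ j * (σ j)⁻¹) := by group
      _ = t' := by rw [hs, mul_inv_cancel]; group
  have hiff : σ j * t' * σ j = σ j ↔ t' = σ j := by
    constructor
    · intro hcc; exact (simple_conj_eq_iff cs j t').mp hcc
    · rintro rfl; rw [hs, one_mul]
  calc eta cs (σ j * t' * σ j) (σ j * t' * σ j)
      = eta cs (σ j * (t' * σ j)) (σ j * t' * σ j) := by rw [← mul_assoc]
    _ = eta cs (σ j) t' * eta cs (t' * σ j) (σ j * t' * σ j) := by rw [eta_mul, hconj1]
    _ = eta cs (σ j) t' * (eta cs t' t' * eta cs (σ j) (σ j * t' * σ j)) := by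
        rw [eta_mul, hconj2]
    _ = -1 := by
        rw [h, eta_simple, eta_simple]
        by_cases hc : t' = σ j
        · rw [if_pos hc, if_pos (hiff.mpr hc)]; norm_num
        · rw [if_neg hc, if_neg (fun hcc => hc (hiff.mp hcc))]; norm_num

lemma eta_refl {t : W} (ht : cs.IsReflection t) : eta cs t t = -1 := by
  obtain ⟨u, i, rfl⟩ := ht
  obtain ⟨l, rfl⟩ := cs.wordProd_surjective u
  induction l with
  | nil => simp [eta_simple]
  | cons j l ih =>
    have hst : π (j :: l) * σ i * (π (j :: l))⁻¹
        = σ j * (π l * σ i * (π l)⁻¹) * σ j := by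
      rw [cs.wordProd_cons, mul_inv_rev, cs.inv_simple]
      group
    rw [hst]
    exact eta_conj_step cs j _ ih

lemma eta_neg_one_imp {w t : W} (h : eta cs w t = -1) : ℓ (w * t) < ℓ w := by
  obtain ⟨ω, hred, rfl⟩ := cs.exists_reduced_word' w
  rw [eta_wordProd] at h
  have hodd : Odd ((cs.rightInvSeq ω).count t) := by
    by_contra hc
    rw [Nat.not_odd_iff_even] at hc
    rw [hc.neg_one_pow] at h
    exact absurd h (by decide)
  have hmem : t ∈ cs.rightInvSeq ω := by
    rw [← List.count_pos_iff]
    exact hodd.pos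
  exact (cs.isRightInversion_of_mem_rightInvSeq hred hmem).2

lemma eta_eq_neg_one_iff {w t : W} (ht : cs.IsReflection t) :
    eta cs w t = -1 ↔ ℓ (w * t) < ℓ w := by
  constructor
  · exact eta_neg_one_imp cs
  · intro h
    by_contra hc
    have h1 : eta cs w t = 1 := by
      rcases Int.units_eq_one_or (eta cs w t) with h' | h'
      · exact h'
      · exact absurd h' hc
    have hc1 : t * t * t⁻¹ = t := by group
    have h2 : eta cs (w * t) t = -1 := by
      rw [eta_mul, hc1, h1, one_mul, eta_refl cs ht]
    have h3 := eta_neg_one_imp cs h2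
    rw [mul_assoc, ht.mul_self, mul_one] at h3
    exact lt_asymm h h3

/-- `t` is a right inversion of `w` iff `eta cs w t = -1` (for reflections `t`). -/
lemma isRightInversion_iff_eta {w t : W} (ht : cs.IsReflection t) :
    cs.IsRightInversion w t ↔ eta cs w t = -1 :=
  ⟨fun h => (eta_eq_neg_one_iff cs ht).mpr h.2,
   fun h => ⟨ht, (eta_eq_neg_one_iff cs ht).mp h⟩⟩


/-- The set of right inversions of `w`. -/
def NR (w : W) : Set W := {t | cs.IsRightInversion w t}

lemma NR_eq_ris {ω : List B} (hred : cs.IsReduced ω) :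
    NR cs (π ω) = {t | t ∈ cs.rightInvSeq ω} := by
  ext t
  constructor
  · intro h
    have h2 := (isRightInversion_iff_eta cs h.1).mp h
    rw [eta_wordProd] at h2
    have hodd : Odd ((cs.rightInvSeq ω).count t) := by
      by_contra hc
      rw [Nat.not_odd_iff_even] at hc
      rw [hc.neg_one_pow] at h2
      exact absurd h2 (by decide)
    rw [Set.mem_setOf_eq, ← List.count_pos_iff]
    exact hodd.pos
  · intro h
    exact cs.isRightInversion_of_mem_rightInvSeq hred h

lemma NR_finite (w : W) : (NR cs w).Finite := by
  obtain ⟨ω, hred, rfl⟩ := cs.exists_reduced_word' w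
  rw [NR_eq_ris cs hred, ← List.coe_toFinset]
  exact (cs.rightInvSeq ω).toFinset.finite_toSet

lemma NR_ncard (w : W) : (NR cs w).ncard = ℓ w := by
  obtain ⟨ω, hred, rfl⟩ := cs.exists_reduced_word' w
  rw [NR_eq_ris cs hred, ← List.coe_toFinset, Set.ncard_coe_finset,
    List.toFinset_card_of_nodup (hred.nodup_rightInvSeq), cs.length_rightInvSeq, hred]

lemma NR_mul (x y : W) :
    NR cs (x * y) = symmDiff ((fun a => y⁻¹ * a * y) '' NR cs x) (NR cs y) := by
  ext t
  have himg : t ∈ ((fun a => y⁻¹ * a * y) '' NR cs x) ↔ cs.IsRightInversion x (y * t * y⁻¹) := by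
    constructor
    · rintro ⟨a, ha, rfl⟩
      have : y * (y⁻¹ * a * y) * y⁻¹ = a := by group
      rw [this]
      exact ha
    · intro h2
      exact ⟨y * t * y⁻¹, h2, by group⟩
  by_cases hrt : cs.IsReflection t
  · have hrc : cs.IsReflection (y * t * y⁻¹) := hrt.conj y
    rw [Set.mem_symmDiff, himg]
    have hmem1 : (t ∈ NR cs (x * y)) = (cs.IsRightInversion (x * y) t) := rfl
    have hmem2 : (t ∈ NR cs y) = (cs.IsRightInversion y t) := rfl
    rw [hmem1, hmem2, isRightInversion_iff_eta cs hrt, isRightInversion_iff_eta cs hrt,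
      isRightInversion_iff_eta cs hrc, eta_mul cs x y t]
    rcases Int.units_eq_one_or (eta cs x (y * t * y⁻¹)) with h1 | h1 <;>
      rcases Int.units_eq_one_or (eta cs y t) with h2 | h2 <;>
      rw [h1, h2] <;> norm_num
  · have h1 : t ∉ NR cs (x * y) := fun h => hrt h.1
    have h2 : t ∉ NR cs y := fun h => hrt h.1
    have h3 : t ∉ ((fun a => y⁻¹ * a * y) '' NR cs x) := by
      rw [himg]
      intro h
      have := h.1.conj y⁻¹
      have he : y⁻¹ * (y * t * y⁻¹) * y⁻¹⁻¹ = t := by group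
      rw [he] at this
      exact hrt this
    simp [Set.mem_symmDiff, h1, h2, h3]


lemma invSet_eq_NR (w : W) : cs.invSet w = NR cs w⁻¹ := by
  ext t
  exact (cs.isRightInversion_inv_iff).symm

lemma invSet_finite (w : W) : (cs.invSet w).Finite := by
  rw [invSet_eq_NR]; exact NR_finite cs w⁻¹

lemma invSet_ncard (w : W) : (cs.invSet w).ncard = ℓ w := by
  rw [invSet_eq_NR, NR_ncard, cs.length_inv]

lemma invSet_cocycle (v w : W) :
    cs.invSet (v * w⁻¹)
      = symmDiff ((fun a => v * a * v⁻¹) '' cs.invSet w⁻¹) (cs.invSet v) := by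
  have h1 : cs.invSet (v * w⁻¹) = NR cs (w * v⁻¹) := by
    rw [invSet_eq_NR]
    congr 1
    group
  rw [h1, NR_mul cs w v⁻¹, invSet_eq_NR cs v, invSet_eq_NR cs w⁻¹]
  simp only [inv_inv]

lemma conj_invSet_inv (v : W) :
    (fun a => v * a * v⁻¹) '' cs.invSet v⁻¹ = cs.invSet v := by
  ext x
  constructor
  · rintro ⟨a, ⟨hra, hla⟩, rfl⟩
    refine ⟨hra.conj v, ?_⟩
    have h1 : v * a * v⁻¹ * v = v * a := by group
    rw [h1]
    have h2 : ℓ (v * a) = ℓ (a * v⁻¹) := by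
      rw [← cs.length_inv (v * a), mul_inv_rev, hra.inv]
    rw [h2, ← cs.length_inv v]
    exact hla
  · rintro ⟨hx, hlx⟩
    refine ⟨v⁻¹ * x * v, ⟨?_, ?_⟩, by group⟩
    · have := hx.conj v⁻¹
      rwa [inv_inv] at this
    · have h1 : v⁻¹ * x * v * v⁻¹ = v⁻¹ * x := by group
      rw [h1]
      have h2 : ℓ (v⁻¹ * x) = ℓ (x * v) := by
        rw [← cs.length_inv (v⁻¹ * x), mul_inv_rev, hx.inv, inv_inv]
      rw [h2, cs.length_inv v]
      exact hlx

lemma set_card_helper {α : Type*} {X Y : Set α} (hX : X.Finite) (hY : Y.Finite) :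
    ((symmDiff X Y).ncard : ℤ) = X.ncard + Y.ncard - 2 * (X ∩ Y).ncard := by
  have hd : symmDiff X Y = (X \ Y) ∪ (Y \ X) := Set.symmDiff_def X Y
  have h1 : (X \ Y).ncard + (X ∩ Y).ncard = X.ncard := by
    rw [← Set.ncard_union_eq Set.disjoint_sdiff_inter hX.diff (hX.inter_of_left _),
      Set.diff_union_inter]
  have h2 : (Y \ X).ncard + (X ∩ Y).ncard = Y.ncard := by
    have hYX : Y ∩ X = X ∩ Y := Set.inter_comm _ _
    rw [← hYX, ← Set.ncard_union_eq Set.disjoint_sdiff_inter hY.diff (hY.inter_of_left _),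
      Set.diff_union_inter]
  have h3 : (symmDiff X Y).ncard = (X \ Y).ncard + (Y \ X).ncard := by
    rw [hd, Set.ncard_union_eq (disjoint_sdiff_sdiff) hX.diff hY.diff]
  omega

lemma card_identity {α : Type*} (P Q S : Set α) (hP : P.Finite) (hQ : Q.Finite) :
    (Q.ncard : ℤ) - 2 * (Q ∩ symmDiff P S).ncard
      = (((symmDiff P Q).ncard : ℤ) - 2 * ((symmDiff P Q) ∩ S).ncard)
        - ((P.ncard : ℤ) - 2 * (P ∩ S).ncard) := by
  have hQP : Q ∩ P = P ∩ Q := Set.inter_comm _ _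
  have e0 : Q ∩ symmDiff P S = symmDiff (P ∩ Q) (Q ∩ S) := by
    ext x; simp only [Set.mem_inter_iff, Set.mem_symmDiff]; tauto
  have e0' : (P ∩ Q) ∩ (Q ∩ S) = P ∩ Q ∩ S := by
    ext x; simp only [Set.mem_inter_iff]; tauto
  have e1 : (symmDiff P Q) ∩ S = symmDiff (P ∩ S) (Q ∩ S) := by
    ext x; simp only [Set.mem_inter_iff, Set.mem_symmDiff]; tauto
  have e1' : (P ∩ S) ∩ (Q ∩ S) = P ∩ Q ∩ S := by
    ext x; simp only [Set.mem_inter_iff]; tauto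
  have c0 : ((Q ∩ symmDiff P S).ncard : ℤ)
      = (P ∩ Q).ncard + (Q ∩ S).ncard - 2 * (P ∩ Q ∩ S).ncard := by
    rw [e0, set_card_helper (hQ.inter_of_right _) (hQ.inter_of_left _), e0']
  have c1 : (((symmDiff P Q) ∩ S).ncard : ℤ)
      = (P ∩ S).ncard + (Q ∩ S).ncard - 2 * (P ∩ Q ∩ S).ncard := by
    rw [e1, set_card_helper (hP.inter_of_left _) (hQ.inter_of_left _), e1']
  have c2 : ((symmDiff P Q).ncard : ℤ) = P.ncard + Q.ncard - 2 * (P ∩ Q).ncard :=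
    set_card_helper hP hQ
  rw [c0, c1, c2]
  ring


lemma tlen_eq (A : Set W) (v w : W) :
    cs.tlen A v w = cs.tlen₀ A w - cs.tlen₀ A v := by
  have hinj : Function.Injective (fun x : W => v * x * v⁻¹) := by
    intro a b hab
    simp only at hab
    exact mul_left_cancel (mul_right_cancel hab)
  set P := cs.invSet v with hP
  set Q := cs.invSet (v * w⁻¹) with hQ
  set S := (fun x : W => v * x * v⁻¹) '' A with hS
  have hfinP : P.Finite := invSet_finite cs v
  have hfinQ : Q.Finite := invSet_finite cs (v * w⁻¹)
  have hX : symmDiff P Q = (fun a => v * a * v⁻¹) '' cs.invSet w⁻¹ := by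
    have h : Q = symmDiff P ((fun a => v * a * v⁻¹) '' cs.invSet w⁻¹) := by
      rw [hQ, invSet_cocycle cs v w, symmDiff_comm]
    rw [h, symmDiff_symmDiff_cancel_left]
  have hc2 : ((cs.invSet w⁻¹ ∩ A).ncard : ℤ) = ((symmDiff P Q ∩ S).ncard : ℤ) := by
    rw [hX, hS, ← Set.image_inter hinj, Set.ncard_image_of_injective _ hinj]
  have hc3 : ((cs.invSet v⁻¹ ∩ A).ncard : ℤ) = ((P ∩ S).ncard : ℤ) := by
    rw [hP, ← conj_invSet_inv cs v, hS, ← Set.image_inter hinj,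
      Set.ncard_image_of_injective _ hinj]
  have hl1 : (cs.length (w * v⁻¹) : ℤ) = (Q.ncard : ℤ) := by
    rw [hQ, invSet_ncard]
    have : w * v⁻¹ = (v * w⁻¹)⁻¹ := by group
    rw [this, cs.length_inv]
  have hl2 : (cs.length w : ℤ) = ((symmDiff P Q).ncard : ℤ) := by
    rw [hX, Set.ncard_image_of_injective _ hinj, invSet_ncard, cs.length_inv]
  have hl3 : (cs.length v : ℤ) = (P.ncard : ℤ) := by
    rw [hP, invSet_ncard]
  show (cs.length (w * v⁻¹) : ℤ) - 2 * ((Q ∩ (symmDiff P S)).ncard : ℤ)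
      = ((cs.length w : ℤ) - 2 * ((cs.invSet w⁻¹ ∩ A).ncard : ℤ))
        - ((cs.length v : ℤ) - 2 * ((cs.invSet v⁻¹ ∩ A).ncard : ℤ))
  rw [hl1, hl2, hl3, hc2, hc3]
  exact card_identity P Q S hfinP hfinQ

end CoxAux


open CoxeterSystem in
/-- Additivity of the twisted length: `ℓ_A(u,v) + ℓ_A(v,w) = ℓ_A(u,w)`, and consequently
`ℓ_A(v,w) = ℓ_A(w) - ℓ_A(v)` and `ℓ_A(u,v) = -ℓ_A(v,u)`. -/
theorem tlen_add
    {B : Type*} {W : Type*} [Group W] {M : CoxeterMatrix B} (cs : CoxeterSystem M W)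
    (A : Set W) (hA : A ⊆ cs.reflSet) (u v w : W) :
    cs.tlen A u v + cs.tlen A v w = cs.tlen A u w ∧
    cs.tlen A v w = cs.tlen₀ A w - cs.tlen₀ A v ∧
    cs.tlen A u v = - cs.tlen A v u := by
  refine ⟨?_, CoxAux.tlen_eq cs A v w, ?_⟩
  · rw [CoxAux.tlen_eq cs A u v, CoxAux.tlen_eq cs A v w, CoxAux.tlen_eq cs A u w]
    ring
  · rw [CoxAux.tlen_eq cs A u v, CoxAux.tlen_eq cs A v u]
    ring
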